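/- (Theorem 2.1: multiplicative weights for the feasibility task, stated for an arbitrary oracle-response sequence.) Let m, n ≥ 1 be integers, A ∈ ℝ^{m×n}, b ∈ ℝ^n, γ ∈ ℝ, ε > 0, ρ > 0, and set β := ε/(2ρ²). Let T ≥ 1 be an integer with T ≥ 4·ε^{−2}·ρ²·ln(2m), and let x_1, …, x_T ∈ ℝ^n be any sequence. For t = 1, …, T, let S_t := ∑_{s<t} x_s (so S_1 = 0), let q_t ∈ ℝ^{2m} be the vector whose first m coordinates are A S_t and whose last m coordinates are −A S_t, and define p_t ∈ ℝ^m by p_t(i) := (exp(β·q_t(i)) − exp(β·q_t(i+m)))/∑_{j=1}^{2m} exp(β·q_t(j)). Assume that for every t: ‖A x_t‖∞ ≤ ρ and ⟨p_t, A x_t⟩ + ⟨b, x_t⟩ ≤ γ − ε. Then the average x_* := (1/T)·∑_{t=1}^T x_t satisfies ‖A x_*‖∞ + ⟨b, x_*⟩ ≤ γ. -/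

import Mathlib

lemma mw_exp_quad {x : ℝ} (hx : |x| ≤ 1) : Real.exp x ≤ 1 + x + x ^ 2 := by
  have h := Real.exp_bound hx (by norm_num : 0 < 3)
  have h2 : ∑ i ∈ Finset.range 3, x ^ i / (Nat.factorial i) = 1 + x + x ^ 2 / 2 := by
    simp [Finset.sum_range_succ]
  rw [h2] at h
  have habs : |x| ^ 3 ≤ x ^ 2 := by
    have h1 : |x| ^ 3 ≤ |x| ^ 2 := pow_le_pow_of_le_one (abs_nonneg x) hx (by norm_num)
    simpa [sq_abs] using h1
  have hx3 : x ^ 3 ≤ |x| ^ 3 := by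
    calc x ^ 3 ≤ |x ^ 3| := le_abs_self _
    _ = |x| ^ 3 := abs_pow x 3
  have h3 := (abs_le.1 h).2
  norm_num [Nat.factorial] at h3
  nlinarith

set_option maxHeartbeats 2000000 in
/-- Theorem 2.1: multiplicative weights for the feasibility task, stated for an
arbitrary oracle-response sequence. The norm on `Fin m → ℝ` is the sup (ℓ∞)
norm; the vector `q_t ∈ ℝ^{2m}` consists of `A S_t` followed by `−A S_t`. -/
theorem mw_feasibility (m n : ℕ) (hm : 1 ≤ m) (hn : 1 ≤ n)
    (A : Matrix (Fin m) (Fin n) ℝ) (b : Fin n → ℝ) (γ : ℝ)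
    (ε ρ : ℝ) (hε : 0 < ε) (hρ : 0 < ρ)
    (β : ℝ) (hβ : β = ε / (2 * ρ ^ 2))
    (T : ℕ) (hT1 : 1 ≤ T)
    (hT : 4 * ε⁻¹ ^ 2 * ρ ^ 2 * Real.log (2 * m) ≤ (T : ℝ))
    (x : Fin T → Fin n → ℝ)
    (S : Fin T → Fin n → ℝ)
    (hS : ∀ t, S t = ∑ s ∈ Finset.univ.filter (fun s => s < t), x s)
    (q : Fin T → Fin (m + m) → ℝ)
    (hq : ∀ t (i : Fin m), q t (Fin.castAdd m i) = A.mulVec (S t) i ∧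
      q t (Fin.natAdd m i) = -(A.mulVec (S t) i))
    (p : Fin T → Fin m → ℝ)
    (hp : ∀ t (i : Fin m), p t i =
      (Real.exp (β * q t (Fin.castAdd m i)) - Real.exp (β * q t (Fin.natAdd m i)))
        / ∑ j, Real.exp (β * q t j))
    (hwidth : ∀ t, ‖A.mulVec (x t)‖ ≤ ρ)
    (horacle : ∀ t, (∑ i, p t i * A.mulVec (x t) i) + (∑ i, b i * x t i) ≤ γ - ε)
    (xstar : Fin n → ℝ) (hxstar : xstar = (T : ℝ)⁻¹ • ∑ t, x t) :
    ‖A.mulVec xstar‖ + (∑ i, b i * xstar i) ≤ γ := by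
  have hTpos : (0:ℝ) < T := by exact_mod_cast hT1
  have hTne : (T:ℝ) ≠ 0 := ne_of_gt hTpos
  haveI : NeZero m := ⟨by omega⟩
  have hβpos : 0 < β := by rw [hβ]; positivity
  -- coordinatewise width bound
  have hv : ∀ (t : Fin T) (i : Fin m), |A.mulVec (x t) i| ≤ ρ := by
    intro t i
    have h1 : ‖A.mulVec (x t) i‖ ≤ ‖A.mulVec (x t)‖ := norm_le_pi_norm _ i
    rw [Real.norm_eq_abs] at h1
    exact h1.trans (hwidth t)
  -- partial sums as a function of a natural number
  set g : ℕ → Fin n → ℝ :=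
    fun k => ∑ t ∈ Finset.univ.filter (fun t : Fin T => (t:ℕ) < k), x t with hgdef
  have hgS : ∀ t : Fin T, S t = g t.val := by
    intro t; rw [hS]
    apply Finset.sum_congr _ (fun _ _ => rfl)
    ext s; simp only [Finset.mem_filter, Finset.mem_univ, true_and, Fin.lt_def]
  have hfil : ∀ k (hk : k < T),
      Finset.univ.filter (fun t : Fin T => (t:ℕ) < k + 1)
        = insert (⟨k, hk⟩ : Fin T)
            (Finset.univ.filter (fun t : Fin T => (t:ℕ) < k)) := by
    intro k hk
    ext s
    simp [Nat.lt_succ_iff_lt_or_eq, Fin.ext_iff, or_comm]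
    exact Nat.le_iff_lt_or_eq.trans or_comm
  have hg0 : g 0 = 0 := by simp [hgdef]
  have hgsucc : ∀ k (hk : k < T), g (k+1) = g k + x ⟨k, hk⟩ := by
    intro k hk
    simp only [hgdef, hfil k hk]
    rw [Finset.sum_insert (by simp)]
    rw [add_comm]
  have hfilT : Finset.univ.filter (fun t : Fin T => (t:ℕ) < T) = Finset.univ := by
    ext s; simp [s.isLt]
  have hgT : g T = ∑ t, x t := by rw [hgdef]; simp only [hfilT]
  -- the potential
  set a : ℕ → Fin m → ℝ := fun k => A.mulVec (g k) with hadef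
  set Φ : ℕ → ℝ :=
    fun k => ∑ i, (Real.exp (β * a k i) + Real.exp (-(β * a k i))) with hΦdef
  have hΦpos : ∀ k, 0 < Φ k := fun k =>
    Finset.sum_pos (fun i _ => by positivity) Finset.univ_nonempty
  have hΦ0 : Φ 0 = 2 * m := by
    simp only [hΦdef, hadef, hg0, Matrix.mulVec_zero, Pi.zero_apply, mul_zero,
      Real.exp_zero, neg_zero, Finset.sum_const, Finset.card_univ, Fintype.card_fin,
      nsmul_eq_mul]
    ring
  -- denominator of p equals the potential
  have hdenom : ∀ t : Fin T, (∑ j, Real.exp (β * q t j)) = Φ t.val := by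
    intro t
    rw [Fin.sum_univ_add, hΦdef, ← Finset.sum_add_distrib]
    apply Finset.sum_congr rfl
    intro i _
    rw [(hq t i).1, (hq t i).2, hgS t, mul_neg]
  have hpΦ : ∀ (t : Fin T) (i : Fin m),
      p t i * Φ t.val = Real.exp (β * a t.val i) - Real.exp (-(β * a t.val i)) := by
    intro t i
    rw [hp t i, (hq t i).1, (hq t i).2, hgS t, hdenom t, mul_neg,
      div_mul_cancel₀ _ (ne_of_gt (hΦpos t.val))]
  -- ℓ¹ bound on p
  have habsp : ∀ t : Fin T, ∑ i, |p t i| ≤ 1 := by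
    intro t
    have h1 : ∀ i, |p t i| ≤
        (Real.exp (β * a t.val i) + Real.exp (-(β * a t.val i))) / Φ t.val := by
      intro i
      have hne := ne_of_gt (hΦpos t.val)
      have heq : |p t i| = |p t i * Φ t.val| / Φ t.val := by
        rw [abs_mul, abs_of_pos (hΦpos t.val), mul_div_cancel_right₀ _ hne]
      rw [heq, hpΦ t i]
      apply div_le_div_of_nonneg_right _ (hΦpos t.val).le
      rw [abs_le]
      constructor <;> nlinarith [Real.exp_pos (β * a t.val i), Real.exp_pos (-(β * a t.val i))]
    calc ∑ i, |p t i|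
        ≤ ∑ i, (Real.exp (β * a t.val i) + Real.exp (-(β * a t.val i))) / Φ t.val :=
          Finset.sum_le_sum (fun i _ => h1 i)
      _ = Φ t.val / Φ t.val := by rw [← Finset.sum_div]
      _ = 1 := div_self (ne_of_gt (hΦpos _))
  -- the oracle inner products
  set c : Fin T → ℝ := fun t => ∑ i, p t i * A.mulVec (x t) i with hcdef
  have hcρ : ∀ t, |c t| ≤ ρ := by
    intro t
    calc |c t| ≤ ∑ i, |p t i * A.mulVec (x t) i| := Finset.abs_sum_le_sum_abs _ _
      _ ≤ ∑ i, |p t i| * ρ := by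
          apply Finset.sum_le_sum
          intro i _
          rw [abs_mul]
          exact mul_le_mul_of_nonneg_left (hv t i) (abs_nonneg _)
      _ = (∑ i, |p t i|) * ρ := by rw [← Finset.sum_mul]
      _ ≤ 1 * ρ := mul_le_mul_of_nonneg_right (habsp t) hρ.le
      _ = ρ := one_mul ρ
  -- the linear part at the average point
  have hbx : ∑ i, b i * xstar i = (T:ℝ)⁻¹ * ∑ t, ∑ i, b i * x t i := by
    rw [hxstar]
    simp only [Pi.smul_apply, Finset.sum_apply, smul_eq_mul]
    calc ∑ i, b i * ((T:ℝ)⁻¹ * ∑ t, x t i)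
        = ∑ i, ∑ t, (T:ℝ)⁻¹ * (b i * x t i) := by
          apply Finset.sum_congr rfl; intro i _
          rw [Finset.mul_sum, Finset.mul_sum]
          apply Finset.sum_congr rfl; intro t _; ring
      _ = ∑ t, ∑ i, (T:ℝ)⁻¹ * (b i * x t i) := Finset.sum_comm
      _ = (T:ℝ)⁻¹ * ∑ t, ∑ i, b i * x t i := by
          rw [Finset.mul_sum]
          apply Finset.sum_congr rfl; intro t _
          rw [Finset.mul_sum]
  
  have hAsum : A.mulVec (∑ t, x t) = ∑ t, A.mulVec (x t) := by
    simp only [← Matrix.mulVecLin_apply]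
    exact map_sum _ _ _
  have hAxstar : A.mulVec xstar = (T:ℝ)⁻¹ • ∑ t, A.mulVec (x t) := by
    rw [hxstar, ← Matrix.mulVecLin_apply, map_smul, Matrix.mulVecLin_apply, hAsum]
  by_cases hcase : ε ≤ 2*ρ
  · -- main case
    have hβρ : β * ρ ≤ 1 := by
      rw [hβ, div_mul_eq_mul_div, div_le_one (by positivity)]
      nlinarith
    have hstep : ∀ (k : ℕ) (hk : k < T),
        Φ (k+1) ≤ Φ k * Real.exp (β * c ⟨k, hk⟩ + β^2 * ρ^2) := by
      intro k hk
      have hae : ∀ i, a (k+1) i = a k i + A.mulVec (x ⟨k,hk⟩) i := by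
        intro i
        simp only [hadef, hgsucc k hk, Matrix.mulVec_add, Pi.add_apply]
      have hpt : ∀ i, Real.exp (β * a (k+1) i) + Real.exp (-(β * a (k+1) i)) ≤
          (Real.exp (β * a k i) + Real.exp (-(β * a k i)))
            + β * (A.mulVec (x ⟨k,hk⟩) i * (Real.exp (β * a k i) - Real.exp (-(β * a k i))))
            + β^2 * ρ^2 * (Real.exp (β * a k i) + Real.exp (-(β * a k i))) := by
        intro i
        have hvi := hv ⟨k,hk⟩ i
        set w : ℝ := A.mulVec (x ⟨k,hk⟩) i with hw
        have hv1 : |β * w| ≤ 1 := by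
          rw [abs_mul, abs_of_pos hβpos]
          calc β * |w| ≤ β * ρ := by gcongr
            _ ≤ 1 := hβρ
        have e1 : Real.exp (β * a (k+1) i) ≤ Real.exp (β * a k i) * (1 + β*w + (β*w)^2) := by
          rw [hae i, mul_add, Real.exp_add]
          exact mul_le_mul_of_nonneg_left (mw_exp_quad hv1) (Real.exp_pos _).le
        have e2 : Real.exp (-(β * a (k+1) i)) ≤
            Real.exp (-(β * a k i)) * (1 + (-(β*w)) + (β*w)^2) := by
          rw [hae i, mul_add, neg_add, Real.exp_add]
          have h := mw_exp_quad (x := -(β*w)) (by rwa [abs_neg])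
          have hsq : (-(β*w))^2 = (β*w)^2 := by ring
          rw [hsq] at h
          exact mul_le_mul_of_nonneg_left h (Real.exp_pos _).le
        have hw2 : w^2 ≤ ρ^2 := by nlinarith [abs_nonneg w, sq_abs w]
        nlinarith [Real.exp_pos (β * a k i), Real.exp_pos (-(β * a k i)),
          mul_le_mul_of_nonneg_left hw2 (mul_nonneg (sq_nonneg β)
            (add_pos (Real.exp_pos (β * a k i)) (Real.exp_pos (-(β * a k i)))).le)]
      have hmid : ∀ i, A.mulVec (x ⟨k,hk⟩) i * (Real.exp (β * a k i) - Real.exp (-(β * a k i)))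
          = Φ k * (p ⟨k,hk⟩ i * A.mulVec (x ⟨k,hk⟩) i) := by
        intro i
        have h := hpΦ ⟨k,hk⟩ i
        rw [show (((⟨k,hk⟩ : Fin T) : ℕ)) = k from rfl] at h
        rw [← h]
        ring
      have hsum1 : Φ (k+1) ≤ Φ k + β * (Φ k * c ⟨k,hk⟩) + β^2*ρ^2 * Φ k := by
        calc Φ (k+1) ≤ ∑ i, ((Real.exp (β * a k i) + Real.exp (-(β * a k i)))
            + β * (A.mulVec (x ⟨k,hk⟩) i * (Real.exp (β * a k i) - Real.exp (-(β * a k i))))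
            + β^2 * ρ^2 * (Real.exp (β * a k i) + Real.exp (-(β * a k i)))) :=
            Finset.sum_le_sum (fun i _ => hpt i)
          _ = Φ k + β * (∑ i, A.mulVec (x ⟨k,hk⟩) i *
                (Real.exp (β * a k i) - Real.exp (-(β * a k i)))) + β^2*ρ^2 * Φ k := by
            rw [Finset.sum_add_distrib, Finset.sum_add_distrib, ← Finset.mul_sum, ← Finset.mul_sum]
          _ = Φ k + β * (Φ k * c ⟨k,hk⟩) + β^2*ρ^2 * Φ k := by
            rw [Finset.sum_congr rfl (fun i _ => hmid i), ← Finset.mul_sum]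
      have heq : Φ k * (1 + (β * c ⟨k,hk⟩ + β^2*ρ^2))
          = Φ k + β * (Φ k * c ⟨k,hk⟩) + β^2*ρ^2 * Φ k := by ring
      calc Φ (k+1) ≤ Φ k * (1 + (β * c ⟨k,hk⟩ + β^2*ρ^2)) := by
            rw [heq]; exact hsum1
        _ ≤ Φ k * Real.exp (β * c ⟨k,hk⟩ + β^2*ρ^2) := by
          apply mul_le_mul_of_nonneg_left _ (hΦpos k).le
          linarith [Real.add_one_le_exp (β * c ⟨k,hk⟩ + β^2*ρ^2)]
    -- cumulative oracle values
    set C : ℕ → ℝ :=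
      fun k => ∑ t ∈ Finset.univ.filter (fun t : Fin T => (t:ℕ) < k), c t with hCdef
    have hC0 : C 0 = 0 := by simp [hCdef]
    have hCsucc : ∀ k (hk : k < T), C (k+1) = C k + c ⟨k,hk⟩ := by
      intro k hk
      simp only [hCdef, hfil k hk]
      rw [Finset.sum_insert (by simp)]
      ring
    have hCT : C T = ∑ t, c t := by rw [hCdef]; simp only [hfilT]
    have hΦle : ∀ k, k ≤ T → Φ k ≤ (2*m) * Real.exp (β * C k + k * (β^2*ρ^2)) := by
      intro k
      induction k with
      | zero =>
        intro _
        rw [hC0, hΦ0]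
        norm_num
      | succ k ih =>
        intro hk1
        have hk : k < T := by omega
        calc Φ (k+1) ≤ Φ k * Real.exp (β * c ⟨k,hk⟩ + β^2*ρ^2) := hstep k hk
          _ ≤ ((2*m) * Real.exp (β * C k + k * (β^2*ρ^2)))
              * Real.exp (β * c ⟨k,hk⟩ + β^2*ρ^2) :=
            mul_le_mul_of_nonneg_right (ih (by omega)) (Real.exp_pos _).le
          _ = (2*m) * Real.exp (β * C (k+1) + (k+1 : ℕ) * (β^2*ρ^2)) := by
            rw [mul_assoc, ← Real.exp_add, hCsucc k hk]
            push_cast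
            ring_nf
    have h2m : (1:ℝ) < 2*m := by
      have h1 : (1:ℝ) ≤ m := by exact_mod_cast hm
      linarith
    have hlog : Real.log (Φ T) ≤ Real.log (2*m) + (β * C T + T*(β^2*ρ^2)) := by
      calc Real.log (Φ T) ≤ Real.log ((2*m) * Real.exp (β * C T + T*(β^2*ρ^2))) :=
          Real.log_le_log (hΦpos T) (hΦle T le_rfl)
        _ = Real.log (2*m) + (β * C T + T*(β^2*ρ^2)) := by
          rw [Real.log_mul (by positivity) (Real.exp_ne_zero _), Real.log_exp]
    have hΦT1 : 1 ≤ Φ T := by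
      have h1 : ∀ i : Fin m, (2:ℝ) ≤ Real.exp (β * a T i) + Real.exp (-(β * a T i)) := by
        intro i
        nlinarith [Real.add_one_le_exp (β * a T i), Real.add_one_le_exp (-(β * a T i))]
      have h2 : (∑ _i : Fin m, (2:ℝ)) ≤ Φ T := Finset.sum_le_sum (fun i _ => h1 i)
      rw [Finset.sum_const, Finset.card_univ, Fintype.card_fin, nsmul_eq_mul] at h2
      have h3 : (1:ℝ) ≤ m := by exact_mod_cast hm
      nlinarith
    have hlogpos : 0 ≤ Real.log (Φ T) := Real.log_nonneg hΦT1
    have hsingle : ∀ i, Real.exp (β * a T i) ≤ Φ T ∧ Real.exp (-(β * a T i)) ≤ Φ T := by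
      intro i
      have h : Real.exp (β * a T i) + Real.exp (-(β * a T i)) ≤ Φ T := by
        have h0 := Finset.single_le_sum
          (f := fun j => Real.exp (β * a T j) + Real.exp (-(β * a T j)))
          (fun j _ => by positivity) (Finset.mem_univ i)
        rw [hΦdef]
        exact h0
      constructor <;> nlinarith [Real.exp_pos (β * a T i), Real.exp_pos (-(β * a T i))]
    have haT : ∀ i, β * |a T i| ≤ Real.log (Φ T) := by
      intro i
      rcases abs_cases (a T i) with ⟨h1, h2⟩ | ⟨h1, h2⟩
      · rw [Real.le_log_iff_exp_le (hΦpos T), h1]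
        exact (hsingle i).1
      · rw [Real.le_log_iff_exp_le (hΦpos T), h1, mul_neg]
        exact (hsingle i).2
    have hgx : ∀ i, a T i = (T:ℝ) * A.mulVec xstar i := by
      intro i
      have h1 : a T i = (∑ t, A.mulVec (x t)) i := by
        rw [hadef]
        simp only
        rw [hgT, hAsum]
      rw [h1, hAxstar, Pi.smul_apply, smul_eq_mul]
      rw [Finset.sum_apply]
      field_simp
    have hnormx : ‖A.mulVec xstar‖ ≤ Real.log (Φ T) / (β * T) := by
      rw [pi_norm_le_iff_of_nonneg (by positivity)]
      intro i
      rw [Real.norm_eq_abs, le_div_iff₀ (by positivity)]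
      have habs : |a T i| = T * |A.mulVec xstar i| := by
        rw [hgx i, abs_mul, abs_of_pos hTpos]
      calc |A.mulVec xstar i| * (β * T) = β * |a T i| := by rw [habs]; ring
        _ ≤ Real.log (Φ T) := haT i
    have hCB : C T + (∑ t, ∑ i, b i * x t i) ≤ T * (γ - ε) := by
      rw [hCT, ← Finset.sum_add_distrib]
      calc ∑ t, (c t + ∑ i, b i * x t i) ≤ ∑ _t : Fin T, (γ - ε) :=
          Finset.sum_le_sum (fun t _ => by simpa only [hcdef] using horacle t)
        _ = T * (γ - ε) := by
          rw [Finset.sum_const, Finset.card_univ, Fintype.card_fin, nsmul_eq_mul]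
    have hβρ2 : β * ρ^2 = ε/2 := by
      rw [hβ]
      field_simp
    have hL : 0 < Real.log (2*m) := Real.log_pos h2m
    have h2L : 2 * Real.log (2*m) ≤ ε * (β * T) := by
      have h4 := mul_le_mul_of_nonneg_left hT (by positivity : (0:ℝ) ≤ ε^2/(2*ρ^2))
      have h5 : (ε^2/(2*ρ^2)) * (4 * ε⁻¹^2 * ρ^2 * Real.log (2*m)) = 2*Real.log (2*m) := by
        field_simp
        ring
      have h6 : (ε^2/(2*ρ^2)) * (T:ℝ) = ε * (β*T) := by rw [hβ]; ring
      rw [h5, h6] at h4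
      exact h4
    rw [hbx]
    have hβTpos : 0 < β * T := by positivity
    rw [← mul_le_mul_iff_of_pos_right hβTpos]
    have hexp : (‖A.mulVec xstar‖ + (T:ℝ)⁻¹ * (∑ t, ∑ i, b i * x t i)) * (β*T)
        = ‖A.mulVec xstar‖*(β*T) + β*(∑ t, ∑ i, b i * x t i) := by
      field_simp
    rw [hexp]
    have h1 : ‖A.mulVec xstar‖ * (β*T) ≤ Real.log (Φ T) :=
      (le_div_iff₀ hβTpos).mp hnormx
    have h7 : (T:ℝ)*(β^2*ρ^2) = (β*T)*(ε/2) := by rw [← hβρ2]; ring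
    have h8 := mul_le_mul_of_nonneg_left hCB hβpos.le
    linarith [h1, hlog, h7, h8, h2L]
  · -- easy case : 2ρ < ε
    push_neg at hcase
    have hnorm : ‖A.mulVec xstar‖ ≤ ρ := by
      rw [hAxstar]
      calc ‖(T:ℝ)⁻¹ • ∑ t, A.mulVec (x t)‖
          = (T:ℝ)⁻¹ * ‖∑ t, A.mulVec (x t)‖ := by
            rw [norm_smul, Real.norm_eq_abs, abs_of_pos (by positivity)]
        _ ≤ (T:ℝ)⁻¹ * ∑ t, ‖A.mulVec (x t)‖ := by
            apply mul_le_mul_of_nonneg_left (norm_sum_le _ _) (by positivity)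
        _ ≤ (T:ℝ)⁻¹ * ∑ _t : Fin T, ρ := by
            apply mul_le_mul_of_nonneg_left (Finset.sum_le_sum fun t _ => hwidth t) (by positivity)
        _ = (T:ℝ)⁻¹ * (T * ρ) := by
            rw [Finset.sum_const, Finset.card_univ, Fintype.card_fin, nsmul_eq_mul]
        _ = ρ := by field_simp
    have hle : ∀ t : Fin T, (∑ i, b i * x t i) ≤ γ - ε + ρ := by
      intro t
      have h1 := horacle t
      have h2 := (abs_le.1 (hcρ t)).1
      simp only [hcdef] at h2
      linarith
    have hsum : (∑ t : Fin T, ∑ i, b i * x t i) ≤ (T:ℝ) * (γ - ε + ρ) := by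
      have h := Finset.sum_le_sum (fun t (_ : t ∈ Finset.univ) => hle t)
      rw [Finset.sum_const, Finset.card_univ, Fintype.card_fin, nsmul_eq_mul] at h
      exact h
    rw [hbx]
    have h3 : (T:ℝ)⁻¹ * (∑ t, ∑ i, b i * x t i) ≤ γ - ε + ρ := by
      calc (T:ℝ)⁻¹ * (∑ t, ∑ i, b i * x t i) ≤ (T:ℝ)⁻¹ * ((T:ℝ) * (γ - ε + ρ)) :=
          mul_le_mul_of_nonneg_left hsum (by positivity)
        _ = γ - ε + ρ := by field_simp
    linarith [hnorm]
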